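/- Let K₁, K₂, N be closed subspaces of a complex Hilbert space E such that P_{K₁} commutes with P_N and P_{K₂} commutes with P_N. Then (K₁ ∗ K₂) ⊓ N = ((K₁ ⊓ N) ∗ (K₂ ⊓ N)) ⊓ N. -/

import Mathlib

variable {E : Type*} [NormedAddCommGroup E] [InnerProductSpace ℂ E] [CompleteSpace E]

/-- Orthogonal projection onto (the topological closure of) a submodule, as a
continuous linear operator on `E`. For a closed subspace `K` this is the
orthogonal projection `P_K` onto `K` itself. -/
noncomputable def proj (K : Submodule ℂ E) : E →L[ℂ] E :=
  K.topologicalClosure.subtypeL.comp (K.topologicalClosure.orthogonalProjectionOnto)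


/-- The Sasaki arrow `K ⇒ M`. -/
noncomputable def sasaki (K M : Submodule ℂ E) : Submodule ℂ E :=
  Kᗮ ⊔ (K ⊓ M)


/-- The Sasaki projection `K ∗ M := (K ⇒ Mᗮ)ᗮ`. -/
noncomputable def sproj (K M : Submodule ℂ E) : Submodule ℂ E :=
  (sasaki K Mᗮ)ᗮ

local notation "⟪" x ", " y "⟫" => @inner ℂ E _ x y

lemma proj_mem (K : Submodule ℂ E) (hK : IsClosed (K : Set E)) (x : E) : proj K x ∈ K := by
  have h : proj K x ∈ K.topologicalClosure := by simp [proj]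
  rwa [hK.submodule_topologicalClosure_eq] at h

lemma proj_eq_self (K : Submodule ℂ E) {x : E} (hx : x ∈ K) : proj K x = x := by
  have hx' : x ∈ K.topologicalClosure := K.le_topologicalClosure hx
  exact (Submodule.starProjection_eq_self_iff (K := K.topologicalClosure)).mpr hx'

lemma proj_adj (K : Submodule ℂ E) (u v : E) : ⟪proj K u, v⟫ = ⟪u, proj K v⟫ := by
  exact Submodule.inner_starProjection_left_eq_right K.topologicalClosure u v

-- proj N maps K into K when they commute
lemma proj_maps (K N : Submodule ℂ E) (hK : IsClosed (K : Set E)) (hN : IsClosed (N : Set E))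
    (h : proj K ∘L proj N = proj N ∘L proj K) {x : E} (hx : x ∈ K) : proj N x ∈ K := by
  have : proj K (proj N x) = proj N x := by
    have := ContinuousLinearMap.ext_iff.mp h x
    simp only [ContinuousLinearMap.comp_apply, proj_eq_self K hx] at this
    exact this
  rw [← this]; exact proj_mem K hK _

-- y ∈ N, y ⊥ (K ⊓ N) implies y ∈ Kᗮ, when proj K commutes with proj N
lemma perp_of_perp_inf (K N : Submodule ℂ E) (hK : IsClosed (K : Set E))
    (hN : IsClosed (N : Set E)) (h : proj K ∘L proj N = proj N ∘L proj K)
    {y : E} (hyN : y ∈ N) (hy : y ∈ (K ⊓ N)ᗮ) : y ∈ Kᗮ := by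
  have hcomm' : proj N ∘L proj K = proj K ∘L proj N := h.symm
  have hPy : proj K y ∈ K ⊓ N :=
    ⟨proj_mem K hK y, proj_maps N K hN hK hcomm' hyN⟩
  have h0 : ⟪proj K y, y⟫ = 0 := by
    simpa using (Submodule.mem_orthogonal _ y).mp hy (proj K y) hPy
  have hPy0 : proj K y = 0 := by
    have : ⟪proj K y, proj K y⟫ = 0 := by
      rw [proj_adj, proj_eq_self K (proj_mem K hK y)]
      exact inner_eq_zero_symm.mp h0
    simpa using this
  rw [Submodule.mem_orthogonal]
  intro u hu
  have : ⟪proj K u, y⟫ = ⟪u, proj K y⟫ := proj_adj K u y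
  rw [proj_eq_self K hu, hPy0, inner_zero_right] at this
  exact this

lemma proj_maps_orth (K N : Submodule ℂ E) (hK : IsClosed (K : Set E))
    (hN : IsClosed (N : Set E)) (h : proj K ∘L proj N = proj N ∘L proj K)
    {y : E} (hy : y ∈ Kᗮ) : proj N y ∈ Kᗮ := by
  rw [Submodule.mem_orthogonal] at hy ⊢
  intro u hu
  rw [← proj_adj N u y]
  exact hy _ (proj_maps K N hK hN h hu)

lemma sproj_eq (K M : Submodule ℂ E) (hK : IsClosed (K : Set E)) :
    sproj K M = K ⊓ (K ⊓ Mᗮ)ᗮ := by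
  have : CompleteSpace K := hK.completeSpace_coe
  rw [sproj, sasaki, ← Submodule.inf_orthogonal, Submodule.orthogonal_orthogonal]

theorem stmt14 (K₁ K₂ N : Submodule ℂ E)
    (hK₁ : IsClosed (K₁ : Set E)) (hK₂ : IsClosed (K₂ : Set E)) (hN : IsClosed (N : Set E))
    (h₁ : proj K₁ ∘L proj N = proj N ∘L proj K₁)
    (h₂ : proj K₂ ∘L proj N = proj N ∘L proj K₂) :
    sproj K₁ K₂ ⊓ N = sproj (K₁ ⊓ N) (K₂ ⊓ N) ⊓ N := by
  have hK₁N : IsClosed ((K₁ ⊓ N : Submodule ℂ E) : Set E) := by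
    simpa [Submodule.coe_inf] using hK₁.inter hN
  rw [sproj_eq K₁ K₂ hK₁, sproj_eq (K₁ ⊓ N) (K₂ ⊓ N) hK₁N]
  ext x
  simp only [Submodule.mem_inf]
  constructor
  · rintro ⟨⟨hx1, hxp⟩, hxN⟩
    refine ⟨⟨⟨hx1, hxN⟩, ?_⟩, hxN⟩
    rw [Submodule.mem_orthogonal]
    rintro y ⟨⟨hy1, hyN⟩, hyp⟩
    have hy2 : y ∈ K₂ᗮ := perp_of_perp_inf K₂ N hK₂ hN h₂ hyN hyp
    exact (Submodule.mem_orthogonal _ x).mp hxp y ⟨hy1, hy2⟩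
  · rintro ⟨⟨⟨hx1, _⟩, hxp⟩, hxN⟩
    refine ⟨⟨hx1, ?_⟩, hxN⟩
    rw [Submodule.mem_orthogonal]
    rintro y ⟨hy1, hy2⟩
    have hPy : proj N y ∈ (K₁ ⊓ N) ⊓ (K₂ ⊓ N)ᗮ := by
      refine ⟨⟨proj_maps K₁ N hK₁ hN h₁ hy1, proj_mem N hN y⟩, ?_⟩
      exact Submodule.orthogonal_le inf_le_left (proj_maps_orth K₂ N hK₂ hN h₂ hy2)
    calc ⟪y, x⟫ = ⟪y, proj N x⟫ := by rw [proj_eq_self N hxN]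
    _ = ⟪proj N y, x⟫ := (proj_adj N y x).symm
    _ = 0 := (Submodule.mem_orthogonal _ x).mp hxp _ hPy
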